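/- If integers m ≥ 2 and k ≥ 1 satisfy 1^k + 2^k + ... + (m-1)^k = m^k, then k + 1 < m < 2(k+1). -/

import Mathlib

lemma lemA (i : ℕ) : ∀ k : ℕ, (i+1)^(k+1) ≤ i^(k+1) + (k+1)*(i+1)^k := by
  intro k
  induction k with
  | zero => simp
  | succ k ih =>
    have h1 : i^(k+1) ≤ (i+1)^(k+1) := Nat.pow_le_pow_left (by omega) _
    calc (i+1)^(k+2) = (i+1) * (i+1)^(k+1) := by ring
      _ ≤ (i+1) * (i^(k+1) + (k+1)*(i+1)^k) := Nat.mul_le_mul_left _ ih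
      _ = i * i^(k+1) + i^(k+1) + (k+1)*((i+1)*(i+1)^k) := by ring
      _ ≤ i * i^(k+1) + (i+1)^(k+1) + (k+1)*(i+1)^(k+1) := by
          rw [show (i+1)*(i+1)^k = (i+1)^(k+1) by ring]; omega
      _ = i^(k+2) + (k+2)*(i+1)^(k+1) := by ring

lemma lemB (i : ℕ) : ∀ k : ℕ, i^(k+1) + (k+1)*i^k ≤ (i+1)^(k+1) := by
  intro k
  induction k with
  | zero => simp
  | succ k ih =>
    calc i^(k+2) + (k+2)*i^(k+1)
        ≤ i^(k+2) + (k+2)*i^(k+1) + (k+1)*i^k := by omega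
      _ = (i+1) * (i^(k+1) + (k+1)*i^k) := by ring
      _ ≤ (i+1) * (i+1)^(k+1) := Nat.mul_le_mul_left _ ih
      _ = (i+1)^(k+2) := by ring

lemma sumUpper (k : ℕ) : ∀ n : ℕ, (k+1) * (∑ j ∈ Finset.Icc 1 n, j ^ k) + 1 ≤ (n+1)^(k+1) := by
  intro n
  induction n with
  | zero => simp
  | succ n ih =>
    rw [Finset.sum_Icc_succ_top (by omega)]
    have hb := lemB (n+1) k
    calc (k+1) * ((∑ j ∈ Finset.Icc 1 n, j ^ k) + (n+1)^k) + 1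
        = ((k+1) * (∑ j ∈ Finset.Icc 1 n, j ^ k) + 1) + (k+1)*(n+1)^k := by ring
      _ ≤ (n+1)^(k+1) + (k+1)*(n+1)^k := by omega
      _ ≤ (n+2)^(k+1) := hb

lemma sumLower (k : ℕ) : ∀ n : ℕ, n^(k+1) ≤ (k+1) * (∑ j ∈ Finset.Icc 1 n, j ^ k) := by
  intro n
  induction n with
  | zero => simp
  | succ n ih =>
    rw [Finset.sum_Icc_succ_top (by omega)]
    have ha := lemA n k
    calc (n+1)^(k+1) ≤ n^(k+1) + (k+1)*(n+1)^k := ha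
      _ ≤ (k+1) * (∑ j ∈ Finset.Icc 1 n, j ^ k) + (k+1)*(n+1)^k := by omega
      _ = (k+1) * ((∑ j ∈ Finset.Icc 1 n, j ^ k) + (n+1)^k) := by ring

theorem erdos_moser_bounds (m k : ℕ) (hm : 2 ≤ m) (hk : 1 ≤ k)
    (h : ∑ j ∈ Finset.Icc 1 (m - 1), j ^ k = m ^ k) :
    k + 1 < m ∧ m < 2 * (k + 1) := by
  obtain ⟨n, rfl⟩ : ∃ n, m = n + 1 := ⟨m - 1, by omega⟩
  have hn : 1 ≤ n := by omega
  simp only [Nat.add_sub_cancel] at h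
  -- lower bound
  have hu := sumUpper k n
  rw [h] at hu
  have hmk : 1 ≤ (n+1)^k := Nat.one_le_pow _ _ (by omega)
  have hup : (n+1)^(k+1) = (n+1) * (n+1)^k := by ring
  have hlt : (k+1) * (n+1)^k < (n+1) * (n+1)^k := by omega
  have hlow : k + 1 < n + 1 := Nat.lt_of_mul_lt_mul_right hlt
  refine ⟨hlow, ?_⟩
  -- upper bound
  obtain ⟨l, rfl⟩ : ∃ l, k = l + 1 := ⟨k - 1, by omega⟩
  have hl := sumLower (l+1) n
  rw [h] at hl
  have ha := lemA n l
  have hpos : 0 < (n+1)^l := Nat.one_le_pow _ _ (by omega)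
  have key : n * (n+1) ≤ (l+2) * (n+1) + n * (l+1) := by
    have h1 : n * (n+1)^(l+1) ≤ n * (n^(l+1) + (l+1)*(n+1)^l) := Nat.mul_le_mul_left _ ha
    have h2 : n * n^(l+1) = n^(l+2) := by ring
    have h3 : (n+1)^(l+1) = (n+1) * (n+1)^l := by ring
    have h4 : n * (n+1) * (n+1)^l ≤ ((l+2) * (n+1) + n * (l+1)) * (n+1)^l := by nlinarith
    exact Nat.le_of_mul_le_mul_right h4 hpos
  nlinarith [hlow]
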